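/- Let $a<b$ and let $g:[a,b]\to\mathbb{R}$ be continuous with $g(t)>0$ for all $t$. If $w:[a,b]\to\mathbb{R}$ is continuous and is a viscosity solution of $|w'|=g$ on $(a,b)$, then for every $t_0\in(a,b)$: $w$ attains a local maximum at $t_0$ if and only if $w$ is not differentiable at $t_0$. -/

import Mathlib

open Set

/-- `w` is a viscosity subsolution of `|w'| = g` on `(a,b)`. -/
def ViscositySubsolution (a b : ℝ) (g w : ℝ → ℝ) : Prop :=
  ∀ t0 ∈ Set.Ioo a b, ∀ φ : ℝ → ℝ, Differentiable ℝ φ →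
    IsLocalMax (fun t => w t - φ t) t0 → |deriv φ t0| ≤ g t0

/-- `w` is a viscosity supersolution of `|w'| = g` on `(a,b)`. -/
def ViscositySupersolution (a b : ℝ) (g w : ℝ → ℝ) : Prop :=
  ∀ t0 ∈ Set.Ioo a b, ∀ φ : ℝ → ℝ, Differentiable ℝ φ →
    IsLocalMin (fun t => w t - φ t) t0 → g t0 ≤ |deriv φ t0|

section Helpers

variable {a b : ℝ} {g w : ℝ → ℝ}

lemma deriv_line (ℓ τ : ℝ) : deriv (fun t : ℝ => ℓ * t) τ = ℓ := by
  simpa using ((hasDerivAt_id τ).const_mul ℓ).deriv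

/-- super-solution: no interior minimum pattern with a subcritical line. -/
lemma line_min (hw : ContinuousOn w (Set.Icc a b))
    (hsuper : ViscositySupersolution a b g w)
    {x y z ℓ : ℝ} (hxy : x < y) (hyz : y < z) (hss : Set.Icc x z ⊆ Set.Ioo a b)
    (hg' : ∀ τ ∈ Set.Icc x z, |ℓ| < g τ)
    (h1 : w y - ℓ * y < w x - ℓ * x) (h2 : w y - ℓ * y < w z - ℓ * z) : False := by
  have hxz : x < z := hxy.trans hyz
  have hsubIcc : Set.Icc x z ⊆ Set.Icc a b := fun t ht => ⟨(hss ht).1.le, (hss ht).2.le⟩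
  have hcont : ContinuousOn (fun t => w t - (fun t => ℓ * t) t) (Set.Icc x z) :=
    (hw.mono hsubIcc).sub ((continuous_const.mul continuous_id).continuousOn)
  obtain ⟨τ, hτ, hmin⟩ := isCompact_Icc.exists_isMinOn
    ⟨x, Set.left_mem_Icc.mpr hxz.le⟩ hcont
  have hy : w τ - ℓ * τ ≤ w y - ℓ * y := hmin ⟨hxy.le, hyz.le⟩
  have hltx : w τ - ℓ * τ < w x - ℓ * x := lt_of_le_of_lt hy h1
  have hltz : w τ - ℓ * τ < w z - ℓ * z := lt_of_le_of_lt hy h2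
  have hτIoo : τ ∈ Set.Ioo x z :=
    ⟨lt_of_le_of_ne hτ.1 (fun h => by rw [← h] at hltx; exact lt_irrefl _ hltx),
     lt_of_le_of_ne hτ.2 (fun h => by rw [h] at hltz; exact lt_irrefl _ hltz)⟩
  have hloc : IsLocalMin (fun t => w t - (fun t => ℓ * t) t) τ :=
    hmin.isLocalMin (Icc_mem_nhds hτIoo.1 hτIoo.2)
  have := hsuper τ (hss hτ) (fun t => ℓ * t) (differentiable_id.const_mul ℓ) hloc
  rw [deriv_line] at this
  exact absurd this (not_le.mpr (hg' τ hτ))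

/-- sub-solution: no interior maximum pattern with a supercritical line. -/
lemma line_max (hw : ContinuousOn w (Set.Icc a b))
    (hsub : ViscositySubsolution a b g w)
    {x y z ℓ : ℝ} (hxy : x < y) (hyz : y < z) (hss : Set.Icc x z ⊆ Set.Ioo a b)
    (hg' : ∀ τ ∈ Set.Icc x z, g τ < |ℓ|)
    (h1 : w x - ℓ * x < w y - ℓ * y) (h2 : w z - ℓ * z < w y - ℓ * y) : False := by
  have hxz : x < z := hxy.trans hyz
  have hsubIcc : Set.Icc x z ⊆ Set.Icc a b := fun t ht => ⟨(hss ht).1.le, (hss ht).2.le⟩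
  have hcont : ContinuousOn (fun t => w t - (fun t => ℓ * t) t) (Set.Icc x z) :=
    (hw.mono hsubIcc).sub ((continuous_const.mul continuous_id).continuousOn)
  obtain ⟨τ, hτ, hmax⟩ := isCompact_Icc.exists_isMaxOn
    ⟨x, Set.left_mem_Icc.mpr hxz.le⟩ hcont
  have hy : w y - ℓ * y ≤ w τ - ℓ * τ := hmax ⟨hxy.le, hyz.le⟩
  have hltx : w x - ℓ * x < w τ - ℓ * τ := lt_of_lt_of_le h1 hy
  have hltz : w z - ℓ * z < w τ - ℓ * τ := lt_of_lt_of_le h2 hy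
  have hτIoo : τ ∈ Set.Ioo x z :=
    ⟨lt_of_le_of_ne hτ.1 (fun h => by rw [← h] at hltx; exact lt_irrefl _ hltx),
     lt_of_le_of_ne hτ.2 (fun h => by rw [h] at hltz; exact lt_irrefl _ hltz)⟩
  have hloc : IsLocalMax (fun t => w t - (fun t => ℓ * t) t) τ :=
    hmax.isLocalMax (Icc_mem_nhds hτIoo.1 hτIoo.2)
  have := hsub τ (hss hτ) (fun t => ℓ * t) (differentiable_id.const_mul ℓ) hloc
  rw [deriv_line] at this
  exact absurd this (not_le.mpr (hg' τ hτ))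

end Helpers

section Penal

variable {a b : ℝ} {g w : ℝ → ℝ}

/-- At a point of differentiability, a supersolution has `g τ ≤ |w' τ|`. -/
lemma no_small_deriv (hg : ContinuousOn g (Set.Icc a b)) (hw : ContinuousOn w (Set.Icc a b))
    (hsuper : ViscositySupersolution a b g w)
    {τ p : ℝ} (hτ : τ ∈ Set.Ioo a b) (hd : HasDerivAt w p τ) (hp : |p| < g τ) : False := by
  have hθ : 0 < (g τ - |p|) / 4 := by linarith [sub_pos.mpr hp]
  set θ := (g τ - |p|) / 4 with hθdef
  have hlo : ∀ᶠ t in nhds τ, |w t - w τ - (t - τ) * p| ≤ θ * |t - τ| := by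
    have := (hasDerivAt_iff_isLittleO.mp hd).def hθ
    simpa [Real.norm_eq_abs, smul_eq_mul] using this
  have hgc : ContinuousAt g τ := hg.continuousAt (Icc_mem_nhds hτ.1 hτ.2)
  have hgev : ∀ᶠ t in nhds τ, |g t - g τ| < θ := by
    have := Metric.tendsto_nhds.mp hgc θ hθ
    simpa [Real.dist_eq] using this
  have hIooev : ∀ᶠ t in nhds τ, t ∈ Set.Ioo a b := isOpen_Ioo.mem_nhds hτ
  obtain ⟨r', hr', hball⟩ := Metric.eventually_nhds_iff.mp ((hlo.and hgev).and hIooev)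
  set r := r' / 2 with hrdef
  have hr : 0 < r := by positivity
  have hrr' : r < r' := by rw [hrdef]; linarith
  have hIccball : ∀ t ∈ Set.Icc (τ - r) (τ + r),
      (|w t - w τ - (t - τ) * p| ≤ θ * |t - τ| ∧ |g t - g τ| < θ) ∧ t ∈ Set.Ioo a b := by
    intro t ht
    apply hball
    rw [Real.dist_eq]
    have h1 : |t - τ| ≤ r := abs_le.mpr ⟨by linarith [ht.1], by linarith [ht.2]⟩
    linarith
  set K := 2 * θ / r with hKdef
  have hK : 0 < K := by positivity
  set φ := fun t : ℝ => p * (t - τ) - K * (t - τ) ^ 2 with hφdef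
  have hφdiff : Differentiable ℝ φ :=
    ((differentiable_id.sub_const τ).const_mul p).sub
      (((differentiable_id.sub_const τ).pow 2).const_mul K)
  have hFcont : ContinuousOn (fun t => w t - φ t) (Set.Icc (τ - r) (τ + r)) := by
    apply ContinuousOn.sub
    · apply hw.mono
      intro t ht
      have := (hIccball t ht).2
      exact ⟨this.1.le, this.2.le⟩
    · exact hφdiff.continuous.continuousOn
  have hne : (Set.Icc (τ - r) (τ + r)).Nonempty := ⟨τ, by constructor <;> linarith⟩
  obtain ⟨τs, hτs, hmin⟩ := isCompact_Icc.exists_isMinOn hne hFcont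
  have hτmem : τ ∈ Set.Icc (τ - r) (τ + r) := ⟨by linarith, by linarith⟩
  have hFτ : w τ - φ τ = w τ := by simp [hφdef]
  have hKr : K * r ^ 2 = 2 * θ * r := by
    rw [hKdef]; field_simp
  have hendpt : ∀ e, e ∈ Set.Icc (τ - r) (τ + r) → |e - τ| = r →
      w τ + θ * r ≤ w e - φ e := by
    intro e he habs
    have hA := (hIccball e he).1.1
    have h2 : (e - τ) ^ 2 = r ^ 2 := by rw [← sq_abs, habs]
    have h3 : w e - φ e = w τ + (w e - w τ - (e - τ) * p) + K * (e - τ) ^ 2 := by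
      rw [hφdef]; ring
    have h4 : -(θ * r) ≤ w e - w τ - (e - τ) * p := by
      have := (abs_le.mp hA).1
      rw [habs] at this
      linarith
    rw [h3, h2, hKr]
    linarith
  have hFle : w τs - φ τs ≤ w τ := by
    have := hmin hτmem
    simpa [hFτ] using this
  have hτsIoo : τs ∈ Set.Ioo (τ - r) (τ + r) := by
    constructor
    · rcases hτs.1.lt_or_eq with h | h
      · exact h
      · exfalso
        have := hendpt τs hτs (by rw [← h]; rw [abs_of_nonpos (by linarith)]; ring)
        linarith [mul_pos hθ hr]
    · rcases hτs.2.lt_or_eq with h | h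
      · exact h
      · exfalso
        have := hendpt τs hτs (by rw [h]; rw [abs_of_nonneg (by linarith)]; ring)
        linarith [mul_pos hθ hr]
  have hAτs := (hIccball τs hτs).1.1
  have hKd : K * |τs - τ| ≤ θ := by
    have h5 : K * (τs - τ) ^ 2 ≤ θ * |τs - τ| := by
      have h6 : w τs - w τ - (τs - τ) * p ≤ -(K * (τs - τ) ^ 2) := by
        rw [hφdef] at hFle; simp only at hFle; nlinarith [hFle]
      have h7 : -(θ * |τs - τ|) ≤ w τs - w τ - (τs - τ) * p := (abs_le.mp hAτs).1
      linarith
    rcases (abs_nonneg (τs - τ)).lt_or_eq with h0 | h0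
    · have h8 : |τs - τ| * |τs - τ| = (τs - τ) ^ 2 := by
        rw [abs_mul_abs_self]; ring
      have h9 : K * |τs - τ| * |τs - τ| ≤ θ * |τs - τ| := by
        rw [mul_assoc, h8]; exact h5
      exact le_of_mul_le_mul_right h9 h0
    · rw [← h0]; simpa using hθ.le
  have hloc : IsLocalMin (fun t => w t - φ t) τs :=
    hmin.isLocalMin (Icc_mem_nhds hτsIoo.1 hτsIoo.2)
  have hsup := hsuper τs (hIccball τs hτs).2 φ hφdiff hloc
  have hder : HasDerivAt φ (p * 1 - K * (2 * (τs - τ) ^ 1 * 1)) τs :=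
    (((hasDerivAt_id τs).sub_const τ).const_mul p).sub
      ((((hasDerivAt_id τs).sub_const τ).pow 2).const_mul K)
  have hderiv : deriv φ τs = p - 2 * K * (τs - τ) := by
    rw [hder.deriv]; ring
  have habs2 : |deriv φ τs| ≤ |p| + 2 * (K * |τs - τ|) := by
    rw [hderiv]
    have h10 : |p - 2 * K * (τs - τ)| ≤ |p| + |2 * K * (τs - τ)| := by
      simpa [sub_eq_add_neg] using abs_add_le p (-(2 * K * (τs - τ)))
    have h11 : |2 * K * (τs - τ)| = 2 * (K * |τs - τ|) := by
      rw [abs_mul, abs_mul]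
      rw [abs_of_nonneg (by norm_num : (0:ℝ) ≤ 2), abs_of_pos hK]
      ring
    rw [h11] at h10
    exact h10
  have hgτs : g τ - θ < g τs := by
    have := (abs_lt.mp (hIccball τs hτs).1.2).1
    linarith
  have : g τ - |p| ≤ 3 * θ := by
    have := hsup.trans habs2
    linarith [hKd]
  rw [hθdef] at this
  linarith [sub_pos.mpr hp]

end Penal

section Penal2

variable {a b : ℝ} {g w : ℝ → ℝ}

/-- At a point of differentiability, a subsolution has `|w' τ| ≤ g τ`. -/
lemma no_big_deriv (hg : ContinuousOn g (Set.Icc a b)) (hw : ContinuousOn w (Set.Icc a b))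
    (hsub : ViscositySubsolution a b g w)
    {τ p : ℝ} (hτ : τ ∈ Set.Ioo a b) (hd : HasDerivAt w p τ) (hp : g τ < |p|) : False := by
  have hθ : 0 < (|p| - g τ) / 4 := by linarith [sub_pos.mpr hp]
  set θ := (|p| - g τ) / 4 with hθdef
  have hlo : ∀ᶠ t in nhds τ, |w t - w τ - (t - τ) * p| ≤ θ * |t - τ| := by
    have := (hasDerivAt_iff_isLittleO.mp hd).def hθ
    simpa [Real.norm_eq_abs, smul_eq_mul] using this
  have hgc : ContinuousAt g τ := hg.continuousAt (Icc_mem_nhds hτ.1 hτ.2)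
  have hgev : ∀ᶠ t in nhds τ, |g t - g τ| < θ := by
    have := Metric.tendsto_nhds.mp hgc θ hθ
    simpa [Real.dist_eq] using this
  have hIooev : ∀ᶠ t in nhds τ, t ∈ Set.Ioo a b := isOpen_Ioo.mem_nhds hτ
  obtain ⟨r', hr', hball⟩ := Metric.eventually_nhds_iff.mp ((hlo.and hgev).and hIooev)
  set r := r' / 2 with hrdef
  have hr : 0 < r := by positivity
  have hrr' : r < r' := by rw [hrdef]; linarith
  have hIccball : ∀ t ∈ Set.Icc (τ - r) (τ + r),
      (|w t - w τ - (t - τ) * p| ≤ θ * |t - τ| ∧ |g t - g τ| < θ) ∧ t ∈ Set.Ioo a b := by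
    intro t ht
    apply hball
    rw [Real.dist_eq]
    have h1 : |t - τ| ≤ r := abs_le.mpr ⟨by linarith [ht.1], by linarith [ht.2]⟩
    linarith
  set K := 2 * θ / r with hKdef
  have hK : 0 < K := by positivity
  set φ := fun t : ℝ => p * (t - τ) + K * (t - τ) ^ 2 with hφdef
  have hφdiff : Differentiable ℝ φ :=
    ((differentiable_id.sub_const τ).const_mul p).add
      (((differentiable_id.sub_const τ).pow 2).const_mul K)
  have hFcont : ContinuousOn (fun t => w t - φ t) (Set.Icc (τ - r) (τ + r)) := by
    apply ContinuousOn.sub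
    · apply hw.mono
      intro t ht
      have := (hIccball t ht).2
      exact ⟨this.1.le, this.2.le⟩
    · exact hφdiff.continuous.continuousOn
  have hne : (Set.Icc (τ - r) (τ + r)).Nonempty := ⟨τ, by constructor <;> linarith⟩
  obtain ⟨τs, hτs, hmax⟩ := isCompact_Icc.exists_isMaxOn hne hFcont
  have hτmem : τ ∈ Set.Icc (τ - r) (τ + r) := ⟨by linarith, by linarith⟩
  have hFτ : w τ - φ τ = w τ := by simp [hφdef]
  have hKr : K * r ^ 2 = 2 * θ * r := by
    rw [hKdef]; field_simp
  have hendpt : ∀ e, e ∈ Set.Icc (τ - r) (τ + r) → |e - τ| = r →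
      w e - φ e ≤ w τ - θ * r := by
    intro e he habs
    have hA := (hIccball e he).1.1
    have h2 : (e - τ) ^ 2 = r ^ 2 := by rw [← sq_abs, habs]
    have h3 : w e - φ e = w τ + (w e - w τ - (e - τ) * p) - K * (e - τ) ^ 2 := by
      rw [hφdef]; ring
    have h4 : w e - w τ - (e - τ) * p ≤ θ * r := by
      have := (abs_le.mp hA).2
      rw [habs] at this
      linarith
    rw [h3, h2, hKr]
    linarith
  have hFge : w τ ≤ w τs - φ τs := by
    have h := hmax hτmem
    simp only [Set.mem_setOf_eq] at h
    rwa [hFτ] at h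
  have hτsIoo : τs ∈ Set.Ioo (τ - r) (τ + r) := by
    constructor
    · rcases hτs.1.lt_or_eq with h | h
      · exact h
      · exfalso
        have := hendpt τs hτs (by rw [← h]; rw [abs_of_nonpos (by linarith)]; ring)
        linarith [mul_pos hθ hr]
    · rcases hτs.2.lt_or_eq with h | h
      · exact h
      · exfalso
        have := hendpt τs hτs (by rw [h]; rw [abs_of_nonneg (by linarith)]; ring)
        linarith [mul_pos hθ hr]
  have hAτs := (hIccball τs hτs).1.1
  have hKd : K * |τs - τ| ≤ θ := by
    have h5 : K * (τs - τ) ^ 2 ≤ θ * |τs - τ| := by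
      have h6 : K * (τs - τ) ^ 2 ≤ w τs - w τ - (τs - τ) * p := by
        rw [hφdef] at hFge; simp only at hFge; nlinarith [hFge]
      have h7 : w τs - w τ - (τs - τ) * p ≤ θ * |τs - τ| := (abs_le.mp hAτs).2
      linarith
    rcases (abs_nonneg (τs - τ)).lt_or_eq with h0 | h0
    · have h8 : |τs - τ| * |τs - τ| = (τs - τ) ^ 2 := by
        rw [abs_mul_abs_self]; ring
      have h9 : K * |τs - τ| * |τs - τ| ≤ θ * |τs - τ| := by
        rw [mul_assoc, h8]; exact h5
      exact le_of_mul_le_mul_right h9 h0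
    · rw [← h0]; simpa using hθ.le
  have hloc : IsLocalMax (fun t => w t - φ t) τs :=
    hmax.isLocalMax (Icc_mem_nhds hτsIoo.1 hτsIoo.2)
  have hsup := hsub τs (hIccball τs hτs).2 φ hφdiff hloc
  have hder : HasDerivAt φ (p * 1 + K * (2 * (τs - τ) ^ 1 * 1)) τs :=
    (((hasDerivAt_id τs).sub_const τ).const_mul p).add
      ((((hasDerivAt_id τs).sub_const τ).pow 2).const_mul K)
  have hderiv : deriv φ τs = p + 2 * K * (τs - τ) := by
    rw [hder.deriv]; ring
  have habs2 : |p| ≤ |deriv φ τs| + 2 * (K * |τs - τ|) := by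
    rw [hderiv]
    have h10 : |p| - |p + 2 * K * (τs - τ)| ≤ |p - (p + 2 * K * (τs - τ))| :=
      abs_sub_abs_le_abs_sub _ _
    have h11 : |p - (p + 2 * K * (τs - τ))| = 2 * (K * |τs - τ|) := by
      have : p - (p + 2 * K * (τs - τ)) = -(2 * K * (τs - τ)) := by ring
      rw [this, abs_neg, abs_mul, abs_mul]
      rw [abs_of_nonneg (by norm_num : (0:ℝ) ≤ 2), abs_of_pos hK]
      ring
    rw [h11] at h10
    linarith
  have hgτs : g τs < g τ + θ := by
    have := (abs_lt.mp (hIccball τs hτs).1.2).2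
    linarith
  have : |p| - g τ ≤ 3 * θ := by
    linarith [hKd, hsup, habs2, hgτs]
  rw [hθdef] at this
  linarith [sub_pos.mpr hp]

end Penal2

section ConcaveDeriv

/-- A function whose adjacent difference quotients are nonincreasing on an open interval
(i.e. a "concave-type" function) is differentiable at some point, with derivative squeezed
between left and right difference quotients. -/
lemma concave_exists_deriv (f : ℝ → ℝ) {p q : ℝ} (hpq : p < q)
    (hadj : ∀ x y z : ℝ, x ∈ Set.Ioo p q → z ∈ Set.Ioo p q → x < y → y < z →
      (f z - f y) / (z - y) ≤ (f y - f x) / (y - x)) :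
    ∃ τ ∈ Set.Ioo p q, ∃ c : ℝ, HasDerivAt f c τ ∧
      (∀ u ∈ Set.Ioo p q, u < τ → c ≤ (f τ - f u) / (τ - u)) ∧
      (∀ y ∈ Set.Ioo p q, τ < y → (f y - f τ) / (y - τ) ≤ c) := by
  set S : ℝ → ℝ → ℝ := fun x y => (f y - f x) / (y - x) with hS
  have hadj' : ∀ x y z : ℝ, x ∈ Set.Ioo p q → z ∈ Set.Ioo p q → x < y → y < z →
      S y z ≤ S x y := hadj
  -- slopes from a fixed left point are nonincreasing
  have m1 : ∀ x y1 y2 : ℝ, x ∈ Set.Ioo p q → y2 ∈ Set.Ioo p q → x < y1 → y1 < y2 →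
      S x y2 ≤ S x y1 := by
    intro x y1 y2 hx hy2 h1 h2
    have h := hadj' x y1 y2 hx hy2 h1 h2
    show (f y2 - f x) / (y2 - x) ≤ (f y1 - f x) / (y1 - x)
    have h' : (f y2 - f y1) / (y2 - y1) ≤ (f y1 - f x) / (y1 - x) := h
    rw [div_le_div_iff₀ (by linarith : (0:ℝ) < y2 - y1) (by linarith : (0:ℝ) < y1 - x)] at h'
    rw [div_le_div_iff₀ (by linarith : (0:ℝ) < y2 - x) (by linarith : (0:ℝ) < y1 - x)]
    have e1 : (f y2 - f x) * (y1 - x)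
        = (f y2 - f y1) * (y1 - x) + (f y1 - f x) * (y1 - x) := by ring
    have e2 : (f y1 - f x) * (y2 - x)
        = (f y1 - f x) * (y2 - y1) + (f y1 - f x) * (y1 - x) := by ring
    linarith
  -- slopes to a fixed right point are nonincreasing
  have m2 : ∀ u1 u2 x : ℝ, u1 ∈ Set.Ioo p q → x ∈ Set.Ioo p q → u1 < u2 → u2 < x →
      S u2 x ≤ S u1 x := by
    intro u1 u2 x hu1 hx h1 h2
    have h := hadj' u1 u2 x hu1 hx h1 h2
    show (f x - f u2) / (x - u2) ≤ (f x - f u1) / (x - u1)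
    have h' : (f x - f u2) / (x - u2) ≤ (f u2 - f u1) / (u2 - u1) := h
    rw [div_le_div_iff₀ (by linarith : (0:ℝ) < x - u2) (by linarith : (0:ℝ) < u2 - u1)] at h'
    rw [div_le_div_iff₀ (by linarith : (0:ℝ) < x - u2) (by linarith : (0:ℝ) < x - u1)]
    have e1 : (f x - f u2) * (x - u1)
        = (f x - f u2) * (x - u2) + (f x - f u2) * (u2 - u1) := by ring
    have e2 : (f x - f u1) * (x - u2)
        = (f x - f u2) * (x - u2) + (f u2 - f u1) * (x - u2) := by ring
    linarith
  set SR : ℝ → Set ℝ := fun x => (fun y => S x y) '' (Set.Ioo x q) with hSR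
  set SL : ℝ → Set ℝ := fun x => (fun u => S u x) '' (Set.Ioo p x) with hSL
  have hSRne : ∀ x ∈ Set.Ioo p q, (SR x).Nonempty := by
    intro x hx
    exact ⟨S x ((x + q) / 2), ⟨(x + q) / 2, ⟨by linarith [hx.2], by linarith [hx.2]⟩, rfl⟩⟩
  have hSLne : ∀ x ∈ Set.Ioo p q, (SL x).Nonempty := by
    intro x hx
    exact ⟨S ((p + x) / 2) x, ⟨(p + x) / 2, ⟨by linarith [hx.1], by linarith [hx.1]⟩, rfl⟩⟩
  have hSRbdd : ∀ x ∈ Set.Ioo p q, BddAbove (SR x) := by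
    intro x hx
    refine ⟨S ((p + x) / 2) x, ?_⟩
    rintro s ⟨y, hy, rfl⟩
    exact hadj' ((p + x) / 2) x y ⟨by linarith [hx.1], by linarith [hx.1, hx.2]⟩
      ⟨by linarith [hx.1, hy.1], hy.2⟩ (by linarith [hx.1]) hy.1
  have hSLbdd : ∀ x ∈ Set.Ioo p q, BddBelow (SL x) := by
    intro x hx
    refine ⟨S x ((x + q) / 2), ?_⟩
    rintro s ⟨u, hu, rfl⟩
    exact hadj' u x ((x + q) / 2) ⟨hu.1, by linarith [hu.2, hx.2]⟩
      ⟨by linarith [hx.1, hx.2], by linarith [hx.2]⟩ hu.2 (by linarith [hx.2])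
  set R : ℝ → ℝ := fun x => sSup (SR x) with hR
  set L : ℝ → ℝ := fun x => sInf (SL x) with hL
  have h_RL : ∀ x ∈ Set.Ioo p q, R x ≤ L x := by
    intro x hx
    apply csSup_le (hSRne x hx)
    rintro s ⟨y, hy, rfl⟩
    apply le_csInf (hSLne x hx)
    rintro t ⟨u, hu, rfl⟩
    exact hadj' u x y ⟨hu.1, hu.2.trans hx.2⟩ ⟨hx.1.trans hy.1, hy.2⟩ hu.2 hy.1
  have h_int : ∀ x1 x2 : ℝ, x1 ∈ Set.Ioo p q → x2 ∈ Set.Ioo p q → x1 < x2 →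
      L x2 ≤ R x1 := by
    intro x1 x2 hx1 hx2 h12
    have hmem1 : S x1 x2 ∈ SL x2 := ⟨x1, ⟨hx1.1, h12⟩, rfl⟩
    have hmem2 : S x1 x2 ∈ SR x1 := ⟨x2, ⟨h12, hx2.2⟩, rfl⟩
    exact (csInf_le (hSLbdd x2 hx2) hmem1).trans (le_csSup (hSRbdd x1 hx1) hmem2)
  classical
  set B : Set ℝ := {x | x ∈ Set.Ioo p q ∧ R x < L x} with hB
  set F : ℝ → ℚ := fun x => if h : x ∈ Set.Ioo p q ∧ R x < L x
    then (exists_rat_btwn h.2).choose else 0 with hF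
  have hFspec : ∀ x : ℝ, ∀ hx : x ∈ Set.Ioo p q ∧ R x < L x,
      R x < (F x : ℝ) ∧ ((F x : ℝ)) < L x := by
    intro x hx
    have : F x = (exists_rat_btwn hx.2).choose := by rw [hF]; exact dif_pos hx
    rw [this]
    exact (exists_rat_btwn hx.2).choose_spec
  have hBc : B.Countable := by
    rw [Set.countable_iff_exists_injOn]
    refine ⟨fun x => Encodable.encode (F x), ?_⟩
    intro x1 hx1 x2 hx2 he
    have hx1' : x1 ∈ Set.Ioo p q ∧ R x1 < L x1 := hx1
    have hx2' : x2 ∈ Set.Ioo p q ∧ R x2 < L x2 := hx2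
    have he' : F x1 = F x2 := Encodable.encode_injective he
    by_contra hne
    have hs1 := hFspec x1 hx1'
    have hs2 := hFspec x2 hx2'
    rcases lt_or_gt_of_ne hne with hlt | hlt
    · have h3 := h_int x1 x2 hx1'.1 hx2'.1 hlt
      rw [he'] at hs1
      linarith [hs1.1, hs2.2]
    · have h3 := h_int x2 x1 hx2'.1 hx1'.1 hlt
      rw [he'] at hs1
      linarith [hs1.2, hs2.1]
  have hdense : Dense Bᶜ := hBc.dense_compl ℝ
  have hIoone : (Set.Ioo p q).Nonempty :=
    ⟨(p + q) / 2, Set.mem_Ioo.mpr ⟨by linarith, by linarith⟩⟩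
  obtain ⟨τ, hτB, hτIoo⟩ := hdense.exists_mem_open isOpen_Ioo hIoone
  have hRLτ : R τ = L τ := by
    by_contra hne
    exact hτB ⟨hτIoo, lt_of_le_of_ne (h_RL τ hτIoo) hne⟩
  refine ⟨τ, hτIoo, R τ, ?_, ?_, ?_⟩
  · -- HasDerivAt
    rw [hasDerivAt_iff_tendsto_slope]
    rw [Metric.tendsto_nhdsWithin_nhds]
    intro ε hε
    have hsup_eq : sSup (SR τ) = R τ := rfl
    have hinf_eq : sInf (SL τ) = L τ := rfl
    obtain ⟨s, hsmem, hs⟩ := exists_lt_of_lt_csSup (hSRne τ hτIoo)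
      (show R τ - ε < sSup (SR τ) by rw [hsup_eq]; linarith)
    obtain ⟨y₁, hy₁, rfl⟩ := hsmem
    simp only at hs
    obtain ⟨t, htmem, ht⟩ := exists_lt_of_csInf_lt (hSLne τ hτIoo)
      (show sInf (SL τ) < R τ + ε by rw [hinf_eq, ← hRLτ]; linarith)
    obtain ⟨u₁, hu₁, rfl⟩ := htmem
    simp only at ht
    refine ⟨min (y₁ - τ) (τ - u₁),
      lt_min (by linarith [hy₁.1]) (by linarith [hu₁.2]), ?_⟩
    intro x hx hdist
    rw [Real.dist_eq] at hdist
    have hxne : x ≠ τ := hx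
    have hslope : slope f τ x = S τ x := by rw [slope_def_field]
    rcases lt_or_gt_of_ne hxne with hlt | hgt
    · -- x < τ
      have hxu : u₁ < x := by
        have h1 := (abs_lt.mp hdist).1
        have hm := min_le_right (y₁ - τ) (τ - u₁)
        linarith
      have hxIoo : x ∈ Set.Ioo p τ := ⟨hu₁.1.trans hxu, hlt⟩
      have hup : S x τ ≤ S u₁ τ := m2 u₁ x τ ⟨hu₁.1, hu₁.2.trans hτIoo.2⟩ hτIoo hxu hlt
      have hlo2 : L τ ≤ S x τ := csInf_le (hSLbdd τ hτIoo) ⟨x, hxIoo, rfl⟩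
      have hcx : R τ ≤ S x τ := by rw [hRLτ]; exact hlo2
      have hsymm : S τ x = S x τ := by
        show (f x - f τ) / (x - τ) = (f τ - f x) / (τ - x)
        rw [← neg_div_neg_eq]; ring_nf
      rw [Real.dist_eq, hslope, hsymm, abs_lt]
      constructor
      · linarith
      · linarith
    · -- τ < x
      have hxy : x < y₁ := by
        have h2 := (abs_lt.mp hdist).2
        have hm := min_le_left (y₁ - τ) (τ - u₁)
        linarith
      have hxIoo : x ∈ Set.Ioo τ q := ⟨hgt, hxy.trans hy₁.2⟩
      have hlo3 : S τ y₁ ≤ S τ x := m1 τ x y₁ hτIoo ⟨hτIoo.1.trans hy₁.1, hy₁.2⟩ hgt hxy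
      have hup3 : S τ x ≤ R τ := le_csSup (hSRbdd τ hτIoo) ⟨x, hxIoo, rfl⟩
      rw [Real.dist_eq, hslope, abs_lt]
      constructor
      · linarith
      · linarith
  · intro u hu hu2
    have h1 : L τ ≤ S u τ := csInf_le (hSLbdd τ hτIoo) ⟨u, ⟨hu.1, hu2⟩, rfl⟩
    show R τ ≤ S u τ
    rw [hRLτ]
    exact h1
  · intro y hy hy2
    show S τ y ≤ R τ
    exact le_csSup (hSRbdd τ hτIoo) ⟨y, ⟨hy2, hy.2⟩, rfl⟩

end ConcaveDeriv

section CaseRight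

set_option maxHeartbeats 2000000 in
/-- If `w t > w t0` for `t` arbitrarily close to `t0` on the right, then `w` is
differentiable at `t0` (with derivative `g t0`). -/
lemma case_right {a b : ℝ} {g w : ℝ → ℝ}
    (hg : ContinuousOn g (Set.Icc a b)) (hgpos : ∀ t ∈ Set.Icc a b, 0 < g t)
    (hw : ContinuousOn w (Set.Icc a b))
    (hsub : ViscositySubsolution a b g w) (hsuper : ViscositySupersolution a b g w)
    {t0 : ℝ} (ht0 : t0 ∈ Set.Ioo a b)
    (hwit : ∀ δ > 0, ∃ t, t0 < t ∧ t < t0 + δ ∧ t < b ∧ w t0 < w t) :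
    DifferentiableAt ℝ w t0 := by
  set g0 := g t0 with hg0def
  have hg0 : 0 < g0 := hgpos t0 ⟨ht0.1.le, ht0.2.le⟩
  suffices hD : HasDerivAt w g0 t0 from hD.differentiableAt
  rw [hasDerivAt_iff_tendsto_slope, Metric.tendsto_nhdsWithin_nhds]
  intro ε hε
  set θ := min (ε / 4) (g0 / 10) with hθdef
  have hθ : 0 < θ := lt_min (by linarith) (by linarith)
  have hθε : 3 * θ < ε := by
    have := min_le_left (ε / 4) (g0 / 10)
    have h4 : θ ≤ ε / 4 := this
    linarith
  have hθg : 10 * θ ≤ g0 := by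
    have := min_le_right (ε / 4) (g0 / 10)
    linarith
  -- choose the basic interval
  have hgc : ContinuousAt g t0 := hg.continuousAt (Icc_mem_nhds ht0.1 ht0.2)
  obtain ⟨r1, hr1, hgball⟩ : ∃ r1 > 0, ∀ τ : ℝ, |τ - t0| < r1 → |g τ - g0| < θ := by
    have := Metric.tendsto_nhds.mp hgc θ hθ
    rw [Metric.eventually_nhds_iff] at this
    obtain ⟨r1, hr1, h⟩ := this
    exact ⟨r1, hr1, fun τ hτ => by
      have := h (show dist τ t0 < r1 by rwa [Real.dist_eq]); rwa [Real.dist_eq] at this⟩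
  set δ₁ := min (r1 / 2) (min ((t0 - a) / 2) ((b - t0) / 2)) with hδ₁def
  have hδ₁ : 0 < δ₁ := by
    apply lt_min (by linarith)
    apply lt_min
    · have := ht0.1; linarith
    · have := ht0.2; linarith
  have hδ₁r1 : δ₁ ≤ r1 / 2 := min_le_left _ _
  have hδ₁a : δ₁ ≤ (t0 - a) / 2 := (min_le_right _ _).trans (min_le_left _ _)
  have hδ₁b : δ₁ ≤ (b - t0) / 2 := (min_le_right _ _).trans (min_le_right _ _)
  have hIccIoo : Set.Icc (t0 - δ₁) (t0 + δ₁) ⊆ Set.Ioo a b := by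
    intro τ hτ
    constructor
    · have := hτ.1; have := ht0.1; linarith
    · have := hτ.2; have := ht0.2; linarith
  have hgI : ∀ τ ∈ Set.Icc (t0 - δ₁) (t0 + δ₁), g0 - θ < g τ ∧ g τ < g0 + θ := by
    intro τ hτ
    have habs : |τ - t0| < r1 := by
      have h1 : |τ - t0| ≤ δ₁ := abs_le.mpr ⟨by linarith [hτ.1], by linarith [hτ.2]⟩
      linarith
    have := abs_lt.mp (hgball τ habs)
    constructor <;> linarith [this.1, this.2]
  -- STEP A : upper slope bound on the inner interval
  have hA : ∀ x y : ℝ, t0 - δ₁ / 2 ≤ x → x < y → y ≤ t0 + δ₁ / 2 →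
      w y - w x ≤ (g0 + 2 * θ) * (y - x) := by
    intro x y hx hxy hy
    by_contra hc
    push_neg at hc
    -- hc : (g0 + 2θ)(y-x) < w y - w x
    have hsubIJ : ∀ u v : ℝ, t0 - δ₁ ≤ u → v ≤ t0 + δ₁ → Set.Icc u v ⊆ Set.Ioo a b :=
      fun u v hu hv => fun τ hτ => hIccIoo ⟨by linarith [hτ.1], by linarith [hτ.2]⟩
    -- all slopes beyond y are at least g0 + (3/2)θ
    have SA1 : ∀ z, y < z → z < t0 + δ₁ → (g0 + 3 / 2 * θ) * (z - y) ≤ w z - w y := by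
      intro z hyz hz
      by_contra hc2
      push_neg at hc2
      refine line_max hw hsub (ℓ := g0 + 2 * θ) hxy hyz
        (hsubIJ x z (by linarith) (by linarith)) ?_ ?_ ?_
      · intro τ hτ
        have := (hgI τ ⟨by linarith [hτ.1], by linarith [hτ.2]⟩).2
        rw [abs_of_pos (by linarith)]
        linarith
      · have e3 : (g0 + 2 * θ) * (y - x) = (g0 + 2 * θ) * y - (g0 + 2 * θ) * x := by ring
        linarith [hc, e3]
      · have h6 : (g0 + 3 / 2 * θ) * (z - y) ≤ (g0 + 2 * θ) * (z - y) :=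
          mul_le_mul_of_nonneg_right (by linarith) (by linarith)
        have e3 : (g0 + 2 * θ) * (z - y) = (g0 + 2 * θ) * z - (g0 + 2 * θ) * y := by ring
        linarith [hc2, h6, e3]
    -- all slopes within (y, t0+δ₁) are at least g0 + (5/4)θ
    have SA2 : ∀ z1 z2, y < z1 → z1 < z2 → z2 < t0 + δ₁ →
        (g0 + 5 / 4 * θ) * (z2 - z1) ≤ w z2 - w z1 := by
      intro z1 z2 h1 h2 h3
      by_contra hc2
      push_neg at hc2
      have hs1 := SA1 z1 h1 (by linarith)
      refine line_max hw hsub (ℓ := g0 + 11 / 8 * θ) h1 h2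
        (hsubIJ y z2 (by linarith) (by linarith)) ?_ ?_ ?_
      · intro τ hτ
        have := (hgI τ ⟨by linarith [hτ.1], by linarith [hτ.2]⟩).2
        rw [abs_of_pos (by linarith)]
        linarith
      · have h6 : (g0 + 11 / 8 * θ) * (z1 - y) < (g0 + 3 / 2 * θ) * (z1 - y) :=
          mul_lt_mul_of_pos_right (by linarith) (by linarith)
        have e3 : (g0 + 11 / 8 * θ) * (z1 - y) = (g0 + 11 / 8 * θ) * z1 - (g0 + 11 / 8 * θ) * y := by
          ring
        linarith [hs1, h6, e3]
      · have h6 : (g0 + 5 / 4 * θ) * (z2 - z1) < (g0 + 11 / 8 * θ) * (z2 - z1) :=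
          mul_lt_mul_of_pos_right (by linarith) (by linarith)
        have e3 : (g0 + 11 / 8 * θ) * (z2 - z1)
            = (g0 + 11 / 8 * θ) * z2 - (g0 + 11 / 8 * θ) * z1 := by ring
        linarith [hc2, h6, e3]
    -- adjacent slopes are nondecreasing in (y, t0+δ₁) : "convexity"
    have SA3 : ∀ x' y' z' : ℝ, x' ∈ Set.Ioo y (t0 + δ₁) → z' ∈ Set.Ioo y (t0 + δ₁) →
        x' < y' → y' < z' →
        (w y' - w x') / (y' - x') ≤ (w z' - w y') / (z' - y') := by
      intro x' y' z' hx' hz' h1 h2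
      by_contra hc2
      push_neg at hc2
      obtain ⟨s1, hs1def⟩ : ∃ s1 : ℝ, s1 = (w y' - w x') / (y' - x') := ⟨_, rfl⟩
      obtain ⟨s2, hs2def⟩ : ∃ s2 : ℝ, s2 = (w z' - w y') / (z' - y') := ⟨_, rfl⟩
      rw [← hs1def, ← hs2def] at hc2
      have hd1 : (0:ℝ) < y' - x' := by linarith
      have hd2 : (0:ℝ) < z' - y' := by linarith
      have he1 : s1 * (y' - x') = w y' - w x' := by
        rw [hs1def]; exact div_mul_cancel₀ _ (ne_of_gt hd1)
      have he2 : s2 * (z' - y') = w z' - w y' := by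
        rw [hs2def]; exact div_mul_cancel₀ _ (ne_of_gt hd2)
      have hs2lo : g0 + 5 / 4 * θ ≤ s2 := by
        have := SA2 y' z' (by linarith [hx'.1]) h2 hz'.2
        rw [← he2] at this
        exact le_of_mul_le_mul_right (by linarith) hd2
      obtain ⟨ℓ, hℓdef⟩ : ∃ l : ℝ, l = (s1 + s2) / 2 := ⟨_, rfl⟩
      have hℓ1 : ℓ < s1 := by rw [hℓdef]; linarith
      have hℓ2 : s2 < ℓ := by rw [hℓdef]; linarith
      refine line_max hw hsub (ℓ := ℓ) h1 h2
        (hsubIJ x' z' (by linarith [hx'.1]) (by linarith [hz'.2])) ?_ ?_ ?_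
      · intro τ hτ
        have := (hgI τ ⟨by linarith [hτ.1, hx'.1], by linarith [hτ.2, hz'.2]⟩).2
        rw [abs_of_pos (by linarith)]
        linarith
      · have h5 := mul_lt_mul_of_pos_right hℓ1 hd1
        rw [he1] at h5
        have e3 : ℓ * (y' - x') = ℓ * y' - ℓ * x' := by ring
        linarith [h5, e3]
      · have h5 := mul_lt_mul_of_pos_right hℓ2 hd2
        rw [he2] at h5
        have e3 : ℓ * (z' - y') = ℓ * z' - ℓ * y' := by ring
        linarith [h5, e3]
    -- apply the concave-derivative lemma to -w on (y, t0+δ₁)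
    obtain ⟨τh, hτh, c, hder, hb1, hb2⟩ := concave_exists_deriv (fun t => -(w t))
      (show y < t0 + δ₁ by linarith) (by
        intro x' y' z' hx' hz' h1 h2
        have h := SA3 x' y' z' hx' hz' h1 h2
        have e : ∀ A B C : ℝ, (-A - -B) / C = -((A - B) / C) := by intros; ring
        rw [e, e]
        exact neg_le_neg h)
    have hτhIoo : τh ∈ Set.Ioo a b :=
      hIccIoo ⟨by linarith [hτh.1], by linarith [hτh.2]⟩
    have hwder : HasDerivAt w (-c) τh := by
      have := hder.neg
      have e : (-fun t => -(w t)) = w := by funext t; simp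
      rw [e] at this
      exact this
    -- the derivative is too big
    set u := (y + τh) / 2 with hudef
    have huJ : u ∈ Set.Ioo y (t0 + δ₁) := ⟨by linarith [hτh.1], by linarith [hτh.2]⟩
    have huτ : u < τh := by rw [hudef]; linarith [hτh.1]
    have hcb := hb1 u huJ huτ
    have hprod := SA2 u τh huJ.1 huτ hτh.2
    have hdu : (0:ℝ) < τh - u := by linarith
    have hsl : ((fun t => -(w t)) τh - (fun t => -(w t)) u) / (τh - u)
        = -((w τh - w u) / (τh - u)) := by
      simp only
      ring
    rw [hsl] at hcb
    have hslope_lo : g0 + 5 / 4 * θ ≤ (w τh - w u) / (τh - u) := by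
      rw [le_div_iff₀ hdu]
      linarith
    have hcneg : g0 + 5 / 4 * θ ≤ -c := by linarith
    have : g τh < |(-c)| := by
      have h1 : g τh < g0 + θ :=
        (hgI τh ⟨by linarith [hτh.1], by linarith [hτh.2]⟩).2
      have h2 : -c ≤ |(-c)| := le_abs_self _
      linarith
    exact no_big_deriv hg hw hsub hτhIoo hwder this
  -- STEP B : w is nondecreasing from t0 up to a local maximizer m
  obtain ⟨t1, ht1a, ht1b, ht1c, ht1d⟩ := hwit (δ₁ / 2) (by linarith)
  have hIcc01 : Set.Icc t0 t1 ⊆ Set.Icc a b :=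
    fun τ hτ => ⟨ht0.1.le.trans hτ.1, hτ.2.trans ht1c.le⟩
  obtain ⟨m, hm, hmax⟩ := isCompact_Icc.exists_isMaxOn
    (⟨t0, Set.left_mem_Icc.mpr ht1a.le⟩ : (Set.Icc t0 t1).Nonempty) (hw.mono hIcc01)
  have hwm : ∀ s ∈ Set.Icc t0 t1, w s ≤ w m := fun s hs => hmax hs
  have hmt0 : t0 < m := by
    rcases hm.1.lt_or_eq with h | h
    · exact h
    · exfalso
      have := hwm t1 (Set.right_mem_Icc.mpr ht1a.le)
      rw [← h] at this
      linarith
  have hSB : ∀ x y : ℝ, t0 ≤ x → x < y → y ≤ m → w x ≤ w y := by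
    intro x y hx hxy hy
    by_contra hc
    push_neg at hc
    -- w y < w x
    rcases lt_or_eq_of_le hy with hym | hym
    · -- y < m : min pattern (x, y, m) with the zero line
      have hwxm : w x ≤ w m := hwm x ⟨hx, by linarith [hm.2]⟩
      refine line_min hw hsuper (ℓ := 0) hxy hym
        (fun τ hτ => hIccIoo ⟨by linarith [hτ.1, ht1b, hm.2],
          by linarith [hτ.2, hm.2, ht1b]⟩) ?_ ?_ ?_
      · intro τ hτ
        have hmem : τ ∈ Set.Icc (t0 - δ₁) (t0 + δ₁) :=
          ⟨by linarith [hτ.1, hm.2, ht1b], by linarith [hτ.2, hm.2, ht1b]⟩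
        have h9 := (hgI τ hmem).1
        rw [abs_zero]
        linarith
      · simpa using hc
      · simp only [zero_mul, sub_zero]
        linarith
    · rw [hym] at hc
      have := hwm x ⟨hx, by linarith [hm.2]⟩
      linarith
  -- STEP C : there are right points with slope > g0 - 2θ arbitrarily close
  have hSC : ∀ δ' : ℝ, 0 < δ' → ∃ t, t0 < t ∧ t < t0 + min δ' (δ₁ / 2) ∧
      (g0 - 2 * θ) * (t - t0) < w t - w t0 := by
    intro δ' hδ'
    by_contra hc
    push_neg at hc
    set δ'' := min δ' (δ₁ / 2) with hδ''def
    have hδ'' : 0 < δ'' := lt_min hδ' (by linarith)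
    set q' := min (t0 + δ'') m with hq'def
    have hq'1 : t0 < q' := lt_min (by linarith) hmt0
    have hq'2 : q' ≤ t0 + δ'' := min_le_left _ _
    have hq'3 : q' ≤ m := min_le_right _ _
    have hJIoo : ∀ τ : ℝ, t0 ≤ τ → τ ≤ q' → τ ∈ Set.Icc (t0 - δ₁) (t0 + δ₁) := by
      intro τ h1 h2
      have : δ'' ≤ δ₁ / 2 := min_le_right _ _
      exact ⟨by linarith, by linarith⟩
    -- pair bounds on J = Ioo t0 q'
    have hpair : ∀ x y : ℝ, x ∈ Set.Ioo t0 q' → y ∈ Set.Ioo t0 q' → x < y →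
        0 ≤ w y - w x ∧ w y - w x ≤ (g0 - 3 / 2 * θ) * (y - x) := by
      intro x y hx hy hxy
      constructor
      · have := hSB x y hx.1.le hxy (by linarith [hy.2, hq'3])
        linarith
      · by_contra hc2
        push_neg at hc2
        have hx0 : w x - w t0 ≤ (g0 - 2 * θ) * (x - t0) :=
          hc x hx.1 (lt_of_lt_of_le hx.2 hq'2)
        refine line_min hw hsuper (ℓ := g0 - 7 / 4 * θ) hx.1 hxy
          (fun τ hτ => hIccIoo (hJIoo τ (by linarith [hτ.1]) (by linarith [hτ.2, hy.2]))) ?_ ?_ ?_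
        · intro τ hτ
          have := (hgI τ (hJIoo τ (by linarith [hτ.1]) (by linarith [hτ.2, hy.2]))).1
          rw [abs_of_pos (by linarith)]
          linarith
        · have h6 : (g0 - 2 * θ) * (x - t0) < (g0 - 7 / 4 * θ) * (x - t0) :=
            mul_lt_mul_of_pos_right (by linarith) (by linarith [hx.1])
          have e3 : (g0 - 7 / 4 * θ) * (x - t0)
              = (g0 - 7 / 4 * θ) * x - (g0 - 7 / 4 * θ) * t0 := by ring
          linarith [hx0, h6, e3]
        · have h6 : (g0 - 7 / 4 * θ) * (y - x) < (g0 - 3 / 2 * θ) * (y - x) :=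
            mul_lt_mul_of_pos_right (by linarith) (by linarith)
          have e3 : (g0 - 7 / 4 * θ) * (y - x)
              = (g0 - 7 / 4 * θ) * y - (g0 - 7 / 4 * θ) * x := by ring
          linarith [hc2, h6, e3]
    -- adjacent slopes nonincreasing on J : "concavity"
    have hconc : ∀ x y z : ℝ, x ∈ Set.Ioo t0 q' → z ∈ Set.Ioo t0 q' → x < y → y < z →
        (w z - w y) / (z - y) ≤ (w y - w x) / (y - x) := by
      intro x y z hx hz h1 h2
      by_contra hc2
      push_neg at hc2
      have hyJ : y ∈ Set.Ioo t0 q' := ⟨by linarith [hx.1], by linarith [hz.2]⟩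
      obtain ⟨s1, hs1def⟩ : ∃ s1 : ℝ, s1 = (w y - w x) / (y - x) := ⟨_, rfl⟩
      obtain ⟨s2, hs2def⟩ : ∃ s2 : ℝ, s2 = (w z - w y) / (z - y) := ⟨_, rfl⟩
      rw [← hs1def, ← hs2def] at hc2
      have hd1 : (0:ℝ) < y - x := by linarith
      have hd2 : (0:ℝ) < z - y := by linarith
      have he1 : s1 * (y - x) = w y - w x := by
        rw [hs1def]; exact div_mul_cancel₀ _ (ne_of_gt hd1)
      have he2 : s2 * (z - y) = w z - w y := by
        rw [hs2def]; exact div_mul_cancel₀ _ (ne_of_gt hd2)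
      have hp1 := hpair x y hx hyJ h1
      have hp2 := hpair y z hyJ hz h2
      have hs1lo : 0 ≤ s1 := by
        rw [hs1def]; exact div_nonneg (by linarith [hp1.1]) hd1.le
      have hs2hi : s2 ≤ g0 - 3 / 2 * θ := by
        rw [hs2def, div_le_iff₀ hd2]
        linarith [hp2.2]
      obtain ⟨ℓ, hℓdef⟩ : ∃ l : ℝ, l = (s1 + s2) / 2 := ⟨_, rfl⟩
      have hℓ1 : s1 < ℓ := by rw [hℓdef]; linarith
      have hℓ2 : ℓ < s2 := by rw [hℓdef]; linarith
      refine line_min hw hsuper (ℓ := ℓ) h1 h2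
        (fun τ hτ => hIccIoo (hJIoo τ (by linarith [hτ.1, hx.1]) (by linarith [hτ.2, hz.2]))) ?_ ?_ ?_
      · intro τ hτ
        have := (hgI τ (hJIoo τ (by linarith [hτ.1, hx.1]) (by linarith [hτ.2, hz.2]))).1
        rw [abs_of_nonneg (by linarith)]
        linarith
      · have h5 := mul_lt_mul_of_pos_right hℓ1 hd1
        rw [he1] at h5
        have e3 : ℓ * (y - x) = ℓ * y - ℓ * x := by ring
        linarith [h5, e3]
      · have h5 := mul_lt_mul_of_pos_right hℓ2 hd2
        rw [he2] at h5
        have e3 : ℓ * (z - y) = ℓ * z - ℓ * y := by ring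
        linarith [h5, e3]
    obtain ⟨τh, hτh, c, hder, hb1, hb2⟩ := concave_exists_deriv w hq'1 hconc
    have hτhIcc := hJIoo τh hτh.1.le hτh.2.le
    have hτhIoo : τh ∈ Set.Ioo a b := hIccIoo hτhIcc
    set u := (t0 + τh) / 2 with hudef
    set v := (τh + q') / 2 with hvdef
    have huJ : u ∈ Set.Ioo t0 q' := ⟨by linarith [hτh.1], by linarith [hτh.2]⟩
    have hvJ : v ∈ Set.Ioo t0 q' := ⟨by linarith [hτh.1], by linarith [hτh.2]⟩
    have huτ : u < τh := by rw [hudef]; linarith [hτh.1]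
    have hτv : τh < v := by rw [hvdef]; linarith [hτh.2]
    have hcb1 := hb1 u huJ huτ
    have hcb2 := hb2 v hvJ hτv
    have hp1 := hpair u τh huJ hτh huτ
    have hp2 := hpair τh v hτh hvJ hτv
    have hchi : c ≤ g0 - 3 / 2 * θ := by
      have : (w τh - w u) / (τh - u) ≤ g0 - 3 / 2 * θ := by
        rw [div_le_iff₀ (by linarith : (0:ℝ) < τh - u)]
        linarith [hp1.2]
      linarith
    have hclo : 0 ≤ c := by
      have : 0 ≤ (w v - w τh) / (v - τh) :=
        div_nonneg (by linarith [hp2.1]) (by linarith)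
      linarith
    have habs : |c| < g τh := by
      have h1 := (hgI τh hτhIcc).1
      rw [abs_of_nonneg hclo]
      linarith
    exact no_small_deriv hg hw hsuper hτhIoo hder habs
  -- the witness point t'
  obtain ⟨t', ht'1, ht'2, ht'3⟩ := hSC (δ₁ / 2) (by linarith)
  have ht'δ : t' < t0 + δ₁ / 2 := by
    have : min (δ₁ / 2) (δ₁ / 2) = δ₁ / 2 := min_self _
    rw [this] at ht'2
    exact ht'2
  -- STEP D : right lower slope bound
  have hD : ∀ t, t0 < t → t < t' → (g0 - 3 * θ) * (t - t0) ≤ w t - w t0 := by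
    intro t h1 h2
    by_contra hc
    push_neg at hc
    have hmid : (g0 - 2 * θ) * (t' - t) < w t' - w t := by
      have e3 : (g0 - 2 * θ) * (t' - t0) - (g0 - 3 * θ) * (t - t0) - (g0 - 2 * θ) * (t' - t)
          = θ * (t - t0) := by ring
      have h6 : 0 ≤ θ * (t - t0) := mul_nonneg hθ.le (by linarith)
      linarith [ht'3, hc, e3, h6]
    refine line_min hw hsuper (ℓ := g0 - 5 / 2 * θ) h1 h2
      (fun τ hτ => hIccIoo ⟨by linarith [hτ.1], by linarith [hτ.2]⟩) ?_ ?_ ?_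
    · intro τ hτ
      have := (hgI τ ⟨by linarith [hτ.1], by linarith [hτ.2]⟩).1
      rw [abs_of_pos (by linarith)]
      linarith
    · have h6 : (g0 - 3 * θ) * (t - t0) < (g0 - 5 / 2 * θ) * (t - t0) :=
        mul_lt_mul_of_pos_right (by linarith) (by linarith)
      have e3 : (g0 - 5 / 2 * θ) * (t - t0)
          = (g0 - 5 / 2 * θ) * t - (g0 - 5 / 2 * θ) * t0 := by ring
      linarith [hc, h6, e3]
    · have h6 : (g0 - 5 / 2 * θ) * (t' - t) < (g0 - 2 * θ) * (t' - t) :=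
        mul_lt_mul_of_pos_right (by linarith) (by linarith)
      have e3 : (g0 - 5 / 2 * θ) * (t' - t)
          = (g0 - 5 / 2 * θ) * t' - (g0 - 5 / 2 * θ) * t := by ring
      linarith [hmid, h6, e3]
  -- STEP E : left lower slope bound
  have hE : ∀ s, t0 - δ₁ / 2 < s → s < t0 → (g0 - 3 * θ) * (t0 - s) ≤ w t0 - w s := by
    intro s h1 h2
    by_contra hc
    push_neg at hc
    refine line_min hw hsuper (ℓ := g0 - 5 / 2 * θ) h2 ht'1
      (fun τ hτ => hIccIoo ⟨by linarith [hτ.1], by linarith [hτ.2]⟩) ?_ ?_ ?_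
    · intro τ hτ
      have := (hgI τ ⟨by linarith [hτ.1], by linarith [hτ.2]⟩).1
      rw [abs_of_pos (by linarith)]
      linarith
    · have h6 : (g0 - 3 * θ) * (t0 - s) < (g0 - 5 / 2 * θ) * (t0 - s) :=
        mul_lt_mul_of_pos_right (by linarith) (by linarith)
      have e3 : (g0 - 5 / 2 * θ) * (t0 - s)
          = (g0 - 5 / 2 * θ) * t0 - (g0 - 5 / 2 * θ) * s := by ring
      linarith [hc, h6, e3]
    · have h6 : (g0 - 5 / 2 * θ) * (t' - t0) < (g0 - 2 * θ) * (t' - t0) :=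
        mul_lt_mul_of_pos_right (by linarith) (by linarith)
      have e3 : (g0 - 5 / 2 * θ) * (t' - t0)
          = (g0 - 5 / 2 * θ) * t' - (g0 - 5 / 2 * θ) * t0 := by ring
      linarith [ht'3, h6, e3]
  -- STEP F : conclude
  refine ⟨min (t' - t0) (δ₁ / 2), lt_min (by linarith) (by linarith), ?_⟩
  intro x hx hdist
  rw [Real.dist_eq] at hdist
  have hxne : x ≠ t0 := hx
  have hd1 : |x - t0| < t' - t0 := lt_of_lt_of_le hdist (min_le_left _ _)
  have hd2 : |x - t0| < δ₁ / 2 := lt_of_lt_of_le hdist (min_le_right _ _)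
  rw [slope_def_field, Real.dist_eq]
  rcases lt_or_gt_of_ne hxne with hlt | hgt
  · -- x < t0
    have hxlo : t0 - δ₁ / 2 < x := by
      have := (abs_lt.mp hd2).1
      linarith
    have hlo := hE x hxlo hlt
    have hhi := hA x t0 (by linarith) hlt (by linarith)
    have hdpos : (0:ℝ) < t0 - x := by linarith
    have heq : (w x - w t0) / (x - t0) = (w t0 - w x) / (t0 - x) := by
      rw [← neg_div_neg_eq]; ring_nf
    rw [heq]
    have hub : (w t0 - w x) / (t0 - x) ≤ g0 + 2 * θ := by
      rw [div_le_iff₀ hdpos]; linarith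
    have hlb : g0 - 3 * θ ≤ (w t0 - w x) / (t0 - x) := by
      rw [le_div_iff₀ hdpos]; linarith
    rw [abs_lt]
    constructor <;> [linarith; linarith]
  · -- t0 < x
    have hxhi : x < t' := by
      have := (abs_lt.mp hd1).2
      linarith
    have hlo := hD x hgt hxhi
    have hhi := hA t0 x (by linarith) hgt (by linarith [(abs_lt.mp hd2).2])
    have hdpos : (0:ℝ) < x - t0 := by linarith
    have hub : (w x - w t0) / (x - t0) ≤ g0 + 2 * θ := by
      rw [div_le_iff₀ hdpos]; linarith
    have hlb : g0 - 3 * θ ≤ (w x - w t0) / (x - t0) := by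
      rw [le_div_iff₀ hdpos]; linarith
    rw [abs_lt]
    constructor <;> [linarith; linarith]

end CaseRight

section CaseLeft

/-- Mirror image of `case_right`, by reflecting the real line. -/
lemma case_left {a b : ℝ} {g w : ℝ → ℝ}
    (hg : ContinuousOn g (Set.Icc a b)) (hgpos : ∀ t ∈ Set.Icc a b, 0 < g t)
    (hw : ContinuousOn w (Set.Icc a b))
    (hsub : ViscositySubsolution a b g w) (hsuper : ViscositySupersolution a b g w)
    {t0 : ℝ} (ht0 : t0 ∈ Set.Ioo a b)
    (hwit : ∀ δ > 0, ∃ t, t0 - δ < t ∧ t < t0 ∧ a < t ∧ w t0 < w t) :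
    DifferentiableAt ℝ w t0 := by
  set g' : ℝ → ℝ := fun t => g (-t) with hg'def
  set w' : ℝ → ℝ := fun t => w (-t) with hw'def
  have hmapsTo : ∀ t ∈ Set.Icc (-b) (-a), -t ∈ Set.Icc a b :=
    fun t ht => ⟨by linarith [ht.2], by linarith [ht.1]⟩
  have hnegc : ContinuousOn (fun t : ℝ => -t) (Set.Icc (-b) (-a)) :=
    (continuous_neg).continuousOn
  have hg' : ContinuousOn g' (Set.Icc (-b) (-a)) := hg.comp hnegc hmapsTo
  have hw' : ContinuousOn w' (Set.Icc (-b) (-a)) := hw.comp hnegc hmapsTo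
  have hgpos' : ∀ t ∈ Set.Icc (-b) (-a), 0 < g' t := fun t ht => hgpos (-t) (hmapsTo t ht)
  have hmemIoo : ∀ τ : ℝ, τ ∈ Set.Ioo (-b) (-a) → -τ ∈ Set.Ioo a b :=
    fun τ hτ => ⟨by linarith [hτ.2], by linarith [hτ.1]⟩
  have hten : ∀ τ : ℝ, Filter.Tendsto (fun t : ℝ => -t) (nhds (-τ)) (nhds τ) := by
    intro τ
    have := (continuous_neg (G := ℝ)).tendsto (-τ)
    simpa using this
  have hderψ : ∀ (φ : ℝ → ℝ), Differentiable ℝ φ → ∀ τ : ℝ,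
      |deriv (fun t => φ (-t)) (-τ)| = |deriv φ τ| := by
    intro φ hφ τ
    have hφd2 : HasDerivAt φ (deriv φ τ) (-(-τ)) := by
      rw [neg_neg]; exact (hφ τ).hasDerivAt
    have h1 : HasDerivAt (fun t : ℝ => -t) (-1) (-τ) := hasDerivAt_neg _
    have h2 : HasDerivAt (fun t => φ (-t)) (deriv φ τ * (-1)) (-τ) := hφd2.comp (-τ) h1
    rw [h2.deriv, mul_neg_one, abs_neg]
  have hsub' : ViscositySubsolution (-b) (-a) g' w' := by
    intro τ hτ φ hφ hmax
    have hmax2 : IsLocalMax (fun t => w t - (fun u => φ (-u)) t) (-τ) := by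
      have h3 := (hten τ).eventually hmax
      refine h3.mono ?_
      intro x hx
      simp only [hw'def, neg_neg] at hx ⊢
      exact hx
    have h4 := hsub (-τ) (hmemIoo τ hτ) (fun u => φ (-u))
      (hφ.comp (differentiable_id.neg)) hmax2
    rw [hderψ φ hφ τ] at h4
    exact h4
  have hsuper' : ViscositySupersolution (-b) (-a) g' w' := by
    intro τ hτ φ hφ hmin
    have hmin2 : IsLocalMin (fun t => w t - (fun u => φ (-u)) t) (-τ) := by
      have h3 := (hten τ).eventually hmin
      refine h3.mono ?_
      intro x hx
      simp only [hw'def, neg_neg] at hx ⊢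
      exact hx
    have h4 := hsuper (-τ) (hmemIoo τ hτ) (fun u => φ (-u))
      (hφ.comp (differentiable_id.neg)) hmin2
    rw [hderψ φ hφ τ] at h4
    exact h4
  have ht0' : -t0 ∈ Set.Ioo (-b) (-a) := ⟨by linarith [ht0.2], by linarith [ht0.1]⟩
  have hwit' : ∀ δ > 0, ∃ t, -t0 < t ∧ t < -t0 + δ ∧ t < -a ∧ w' (-t0) < w' t := by
    intro δ hδ
    obtain ⟨s, hs1, hs2, hs3, hs4⟩ := hwit δ hδ
    refine ⟨-s, by linarith, by linarith, by linarith, ?_⟩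
    simp only [hw'def, neg_neg]
    exact hs4
  have hD' := case_right hg' hgpos' hw' hsub' hsuper' ht0' hwit'
  have hD2 : DifferentiableAt ℝ (fun t => w' (-t)) t0 := by
    exact hD'.comp t0 (differentiableAt_id.neg)
  have he : (fun t => w' (-t)) = w := by
    funext t
    simp only [hw'def, neg_neg]
  rwa [he] at hD2

end CaseLeft

theorem solution_local_max_iff_not_differentiable (a b : ℝ) (hab : a < b) (g w : ℝ → ℝ)
    (hg : ContinuousOn g (Set.Icc a b)) (hgpos : ∀ t ∈ Set.Icc a b, 0 < g t)
    (hw : ContinuousOn w (Set.Icc a b))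
    (hsub : ViscositySubsolution a b g w) (hsuper : ViscositySupersolution a b g w) :
    ∀ t0 ∈ Set.Ioo a b, (IsLocalMax w t0 ↔ ¬ DifferentiableAt ℝ w t0) := by
  intro t0 ht0
  constructor
  · intro hmax hdiff
    have hder : deriv w t0 = 0 := hmax.deriv_eq_zero
    have h0 : HasDerivAt w 0 t0 := by
      have := hdiff.hasDerivAt
      rwa [hder] at this
    have habs : |(0:ℝ)| < g t0 := by
      rw [abs_zero]
      exact hgpos t0 ⟨ht0.1.le, ht0.2.le⟩
    exact no_small_deriv hg hw hsuper ht0 h0 habs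
  · intro hnd
    by_contra hmax
    apply hnd
    have hfreq : ∃ᶠ t in nhds t0, w t0 < w t := by
      have h1 : ¬ ∀ᶠ t in nhds t0, w t ≤ w t0 := hmax
      rw [Filter.not_eventually] at h1
      exact h1.mono (fun t ht => not_le.mp ht)
    have hwitgen : ∀ δ > 0, ∃ t, |t - t0| < δ ∧ w t0 < w t := by
      intro δ hδ
      obtain ⟨t, ht1, ht2⟩ := (hfreq.and_eventually (Metric.ball_mem_nhds t0 hδ)).exists
      exact ⟨t, by simpa [Real.dist_eq] using ht2, ht1⟩
    by_cases hR : ∀ δ > 0, ∃ t, t0 < t ∧ t < t0 + δ ∧ t < b ∧ w t0 < w t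
    · exact case_right hg hgpos hw hsub hsuper ht0 hR
    · push_neg at hR
      obtain ⟨δ0, hδ0, hno⟩ := hR
      apply case_left hg hgpos hw hsub hsuper ht0
      intro δ hδ
      have hpos : 0 < min δ (min δ0 (min (b - t0) (t0 - a))) := by
        apply lt_min hδ
        apply lt_min hδ0
        apply lt_min
        · linarith [ht0.2]
        · linarith [ht0.1]
      obtain ⟨t, hdist, hwt⟩ := hwitgen _ hpos
      have habs := abs_lt.mp hdist
      have hm1 : min δ (min δ0 (min (b - t0) (t0 - a))) ≤ δ := min_le_left _ _
      have hm2 : min δ (min δ0 (min (b - t0) (t0 - a))) ≤ δ0 :=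
        (min_le_right _ _).trans (min_le_left _ _)
      have hm3 : min δ (min δ0 (min (b - t0) (t0 - a))) ≤ b - t0 :=
        (min_le_right _ _).trans ((min_le_right _ _).trans (min_le_left _ _))
      have hm4 : min δ (min δ0 (min (b - t0) (t0 - a))) ≤ t0 - a :=
        (min_le_right _ _).trans ((min_le_right _ _).trans (min_le_right _ _))
      have htl : t < t0 := by
        rcases lt_trichotomy t t0 with h | h | h
        · exact h
        · exfalso; rw [h] at hwt; exact lt_irrefl _ hwt
        · exfalso
          have h9 := hno t h (by linarith [habs.2]) (by linarith [habs.2])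
          linarith
      exact ⟨t, by linarith [habs.1], htl, by linarith [habs.1], hwt⟩
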